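/- Let D be an Enriques diagram and C a subset of its vertices such that the induced subgraph of Γ_D on C is connected, endowed with the tree structure from the order of D (root the minimal element of C, immediate predecessor of p the maximal element of {q ∈ C : q < p}). Define p →_C q iff p →_D q, for p, q ∈ C. Then →_C is a proximity relation making C into an Enriques diagram; in particular, every non-root vertex p of C is proximate (in D) to its immediate predecessor in C. -/

import Mathlib

/-- An Enriques diagram: a finite rooted tree (partial order `le`, each non-root
vertex with immediate predecessor `pred`) with a proximity relation `prox`
satisfying the standard axioms. -/
structure EnriquesDiagram (V : Type) [Fintype V] [DecidableEq V] where
  le : V → V → Prop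
  le_refl : ∀ a, le a a
  le_trans : ∀ a b c, le a b → le b c → le a c
  le_antisymm : ∀ a b, le a b → le b a → a = b
  root : V
  root_le : ∀ v, le root v
  pred : V → V
  pred_le : ∀ v, v ≠ root → le (pred v) v
  pred_ne : ∀ v, v ≠ root → pred v ≠ v
  pred_max : ∀ v q, v ≠ root → le q v → q ≠ v → le q (pred v)
  prox : V → V → Prop
  prox_pred : ∀ v, v ≠ root → prox v (pred v)
  root_not_prox : ∀ q, ¬ prox root q
  prox_gt : ∀ p q, prox p q → le q p ∧ p ≠ q
  prox_at_most_two : ∀ p a b c, prox p a → prox p b → prox p c → a = b ∨ b = c ∨ a = c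
  third_unique : ∀ p q a b, prox p q → prox a p → prox a q → prox b p → prox b q → a = b
  prox_pred_prox : ∀ p q', p ≠ root → prox p q' → q' ≠ pred p → prox (pred p) q'

namespace EnriquesDiagram

variable {V : Type} [Fintype V] [DecidableEq V] (D : EnriquesDiagram V)

/-- Number of vertices of `D` proximate to `p`. -/
noncomputable def r (p : V) : ℕ := Set.ncard {q | D.prox q p}

/-- Weight of `p` in the dual graph: `r p + 1`. -/
noncomputable def omega (p : V) : ℕ := D.r p + 1

/-- `p` is extremal: it has no successor. -/
def Extremal (p : V) : Prop := ∀ q, D.le p q → q = p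

/-- `p` is free: proximate to exactly one vertex. -/
def Free (p : V) : Prop := ∃! q, D.prox p q

/-- `p` is satellite: proximate to two distinct vertices. -/
def Satellite (p : V) : Prop := ∃ q₁ q₂, q₁ ≠ q₂ ∧ D.prox p q₁ ∧ D.prox p q₂

/-- `p` is maximal among the vertices of `D` proximate to `q`. -/
def MaxProx (p q : V) : Prop := D.prox p q ∧ ∀ u, D.prox u q → D.le p u → u = p

/-- The dual graph `Γ_D`: `p` and `q` are adjacent iff one is maximal among the
vertices proximate to the other. -/
def dualGraph : SimpleGraph V where
  Adj p q := p ≠ q ∧ (D.MaxProx p q ∨ D.MaxProx q p)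
  symm := by
    constructor
    intro p q h
    exact ⟨h.1.symm, h.2.symm⟩
  loopless := by
    constructor
    intro p h
    exact h.1 rfl

end EnriquesDiagram

namespace EnriquesDiagram

variable {V : Type} [Fintype V] [DecidableEq V] {D : EnriquesDiagram V}

/-- Size of the down-set of a vertex. -/
noncomputable def ds (D : EnriquesDiagram V) (x : V) : ℕ := Set.ncard {z | D.le z x}

lemma ds_pos (D : EnriquesDiagram V) (x : V) : 0 < D.ds x :=
  (Set.ncard_pos (Set.toFinite _)).mpr ⟨x, D.le_refl x⟩

lemma ds_lt {x y : V} (hxy : D.le x y) (hne : x ≠ y) : D.ds x < D.ds y := by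
  apply Set.ncard_lt_ncard _ (Set.toFinite _)
  apply HasSubset.Subset.ssubset_of_ne
  · intro z hz; exact D.le_trans _ _ _ hz hxy
  · intro h
    have : y ∈ {z | D.le z x} := by rw [h]; exact D.le_refl y
    exact hne (D.le_antisymm _ _ this hxy).symm

lemma prox_ne_root {x q : V} (h : D.prox x q) : x ≠ D.root :=
  fun hr => D.root_not_prox q (hr ▸ h)

lemma eq_root_of_le_root {x : V} (h : D.le x D.root) : x = D.root :=
  D.le_antisymm _ _ h (D.root_le x)

/-- The down-set of any vertex is a chain. -/
lemma chain_le : ∀ n (y u v : V), D.ds y ≤ n → D.le u y → D.le v y →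
    D.le u v ∨ D.le v u := by
  intro n
  induction n with
  | zero => intro y u v h _ _; exact absurd h (by have := ds_pos D y; omega)
  | succ n ih =>
    intro y u v hn hu hv
    by_cases huy : u = y
    · subst huy; exact Or.inr hv
    by_cases hvy : v = y
    · subst hvy; exact Or.inl hu
    by_cases hyr : y = D.root
    · subst hyr
      rw [eq_root_of_le_root hu, eq_root_of_le_root hv]
      exact Or.inl (D.le_refl _)
    have hu' := D.pred_max y u hyr hu huy
    have hv' := D.pred_max y v hyr hv hvy
    have hds : D.ds (D.pred y) ≤ n := by
      have := ds_lt (D.pred_le y hyr) (D.pred_ne y hyr)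
      omega
    exact ih (D.pred y) u v hds hu' hv'

lemma chain_le' {y u v : V} (hu : D.le u y) (hv : D.le v y) : D.le u v ∨ D.le v u :=
  chain_le (D.ds y) y u v (Nat.le_refl _) hu hv

/-- Interval lemma: if `c` is proximate to `d` then so is any `x` with `d < x ≤ c`. -/
lemma prox_interval : ∀ n (c x d : V), D.ds c ≤ n → D.prox c d → D.le x c → D.le d x →
    x ≠ d → D.prox x d := by
  intro n
  induction n with
  | zero => intro c x d h _ _ _ _; exact absurd h (by have := ds_pos D c; omega)
  | succ n ih =>
    intro c x d hn hcd hxc hdx hxd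
    by_cases hxceq : x = c
    · subst hxceq; exact hcd
    have hcroot : c ≠ D.root := prox_ne_root hcd
    have hxp : D.le x (D.pred c) := D.pred_max c x hcroot hxc hxceq
    have hpd : D.pred c ≠ d := by
      intro h
      exact hxd (D.le_antisymm _ _ (h ▸ hxp) hdx)
    have hpcd : D.prox (D.pred c) d := D.prox_pred_prox c d hcroot hcd (fun h => hpd h.symm)
    have hds : D.ds (D.pred c) ≤ n := by
      have := ds_lt (D.pred_le c hcroot) (D.pred_ne c hcroot)
      omega
    exact ih (D.pred c) x d hds hpcd hxp hdx hxd

lemma prox_interval' {c x d : V} (hcd : D.prox c d) (hxc : D.le x c) (hdx : D.le d x)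
    (hxd : x ≠ d) : D.prox x d :=
  prox_interval (D.ds c) c x d (Nat.le_refl _) hcd hxc hdx hxd

/-- Existence of the successor of `b` in the direction of `a`. -/
lemma succ_exists : ∀ n (a b : V), D.ds a ≤ n → D.le b a → b ≠ a →
    ∃ μ, D.pred μ = b ∧ D.le μ a ∧ μ ≠ D.root := by
  intro n
  induction n with
  | zero => intro a b h _ _; exact absurd h (by have := ds_pos D a; omega)
  | succ n ih =>
    intro a b hn hba hne
    have haroot : a ≠ D.root := by
      intro h; exact hne (by rw [h]; exact eq_root_of_le_root (h ▸ hba))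
    by_cases hp : D.pred a = b
    · exact ⟨a, hp, D.le_refl a, haroot⟩
    · have hb' : D.le b (D.pred a) := D.pred_max a b haroot hba hne
      have hds : D.ds (D.pred a) ≤ n := by
        have := ds_lt (D.pred_le a haroot) (D.pred_ne a haroot)
        omega
      obtain ⟨μ, h1, h2, h3⟩ := ih (D.pred a) b hds hb' (fun h => hp h.symm)
      exact ⟨μ, h1, D.le_trans _ _ _ h2 (D.pred_le a haroot), h3⟩

/-- Satellite chains over `q` do not branch. -/
lemma nonbranch {w q w1 w2 : V} (hq : D.prox w q) (h1 : D.pred w1 = w) (h2 : D.pred w2 = w)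
    (p1 : D.prox w1 q) (p2 : D.prox w2 q) : w1 = w2 := by
  have hw1r : w1 ≠ D.root := prox_ne_root p1
  have hw2r : w2 ≠ D.root := prox_ne_root p2
  have a1 : D.prox w1 w := h1 ▸ D.prox_pred w1 hw1r
  have a2 : D.prox w2 w := h2 ▸ D.prox_pred w2 hw2r
  exact D.third_unique w q w1 w2 hq a1 p1 a2 p2

/-- Two proximate points of `q` lying above a common `z > q` are comparable. -/
lemma comparable_prox : ∀ n (x y z q : V), D.ds x + D.ds y ≤ n → D.prox x q → D.prox y q →
    D.le z x → D.le z y → ¬ D.le z q → D.le x y ∨ D.le y x := by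
  intro n
  induction n with
  | zero => intro x y z q h _ _ _ _ _
            exact absurd h (by have := ds_pos D x; have := ds_pos D y; omega)
  | succ n ih =>
    intro x y z q hn hx hy hzx hzy hzq
    by_cases hxz : D.le x z
    · exact Or.inl (D.le_trans _ _ _ hxz hzy)
    by_cases hyz : D.le y z
    · exact Or.inr (D.le_trans _ _ _ hyz hzx)
    have hxr : x ≠ D.root := prox_ne_root hx
    have hyr : y ≠ D.root := prox_ne_root hy
    have hzxne : z ≠ x := fun h => hxz (h ▸ D.le_refl z)
    have hzyne : z ≠ y := fun h => hyz (h ▸ D.le_refl z)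
    have hzpx : D.le z (D.pred x) := D.pred_max x z hxr hzx (fun h => hzxne h)
    have hzpy : D.le z (D.pred y) := D.pred_max y z hyr hzy (fun h => hzyne h)
    have hqpx : q ≠ D.pred x := fun h => hzq (D.le_trans _ _ _ hzpx (h ▸ D.le_refl _))
    have hqpy : q ≠ D.pred y := fun h => hzq (D.le_trans _ _ _ hzpy (h ▸ D.le_refl _))
    have hpx : D.prox (D.pred x) q := D.prox_pred_prox x q hxr hx hqpx
    have hpy : D.prox (D.pred y) q := D.prox_pred_prox y q hyr hy hqpy
    by_cases hpp : D.pred x = D.pred y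
    · have : x = y := nonbranch hpx rfl hpp.symm hx hy
      exact Or.inl (this ▸ D.le_refl x)
    have hdx := ds_lt (D.pred_le x hxr) (D.pred_ne x hxr)
    have hdy := ds_lt (D.pred_le y hyr) (D.pred_ne y hyr)
    rcases ih (D.pred x) y z q (by omega) hpx hy hzpx hzy hzq with h1 | h1
    · rcases ih x (D.pred y) z q (by omega) hx hpy hzx hzpy hzq with h2 | h2
      · exact Or.inl (D.le_trans _ _ _ h2 (D.pred_le y hyr))
      · by_cases hey : D.pred x = y
        · exact Or.inr (hey ▸ D.pred_le x hxr)
        by_cases hex : D.pred y = x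
        · exact Or.inl (hex ▸ D.pred_le y hyr)
        have e1 : D.le (D.pred x) (D.pred y) := D.pred_max y (D.pred x) hyr h1 hey
        have e2 : D.le (D.pred y) (D.pred x) := D.pred_max x (D.pred y) hxr h2 hex
        exact absurd (D.le_antisymm _ _ e1 e2) hpp
    · exact Or.inr (D.le_trans _ _ _ h1 (D.pred_le x hxr))

/-- Uniqueness of the maximal proximate point above a common `z`. -/
lemma top_unique {c T b z : V} (h1 : D.MaxProx c b) (h2 : D.MaxProx T b)
    (hzc : D.le z c) (hzT : D.le z T) (hzb : ¬ D.le z b) : c = T := by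
  rcases comparable_prox (D.ds c + D.ds T) c T z b (Nat.le_refl _) h1.1 h2.1 hzc hzT hzb with h | h
  · exact (h1.2 T h2.1 h).symm
  · exact h2.2 c h1.1 h

end EnriquesDiagram

namespace EnriquesDiagram

variable {V : Type} [Fintype V] [DecidableEq V]

lemma dualGraph_adj (D : EnriquesDiagram V) {p q : V} :
    D.dualGraph.Adj p q ↔ p ≠ q ∧ (D.MaxProx p q ∨ D.MaxProx q p) := Iff.rfl

/-- Reachability inside a subset of vertices, along dual-graph edges. -/
inductive Reach (D : EnriquesDiagram V) (s : Set V) : V → V → Prop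
  | refl (x : V) (hx : x ∈ s) : Reach D s x x
  | tail {x y z : V} : Reach D s x y → D.dualGraph.Adj y z → z ∈ s → Reach D s x z

variable {D : EnriquesDiagram V}

lemma Reach.mem_left {s : Set V} {x y : V} (h : Reach D s x y) : x ∈ s := by
  induction h with
  | refl hx => exact hx
  | tail _ _ _ ih => exact ih

lemma Reach.mem_right {s : Set V} {x y : V} (h : Reach D s x y) : y ∈ s := by
  cases h with
  | refl hx => exact hx
  | tail _ _ hz => exact hz

lemma Reach.single {s : Set V} {x y : V} (hx : x ∈ s) (hy : y ∈ s)
    (h : D.dualGraph.Adj x y) : Reach D s x y :=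
  Reach.tail (Reach.refl x hx) h hy

lemma Reach.trans {s : Set V} {x y z : V} (h1 : Reach D s x y) (h2 : Reach D s y z) :
    Reach D s x z := by
  induction h2 with
  | refl _ => exact h1
  | tail _ adj hz ih => exact Reach.tail ih adj hz

lemma Reach.symm {s : Set V} {x y : V} (h : Reach D s x y) : Reach D s y x := by
  induction h with
  | refl hx => exact Reach.refl _ hx
  | tail r adj hz ih => exact Reach.trans (Reach.single hz r.mem_right adj.symm) ih

lemma Reach.mono {s t : Set V} (hst : ∀ v, v ∈ s → v ∈ t) {x y : V} (h : Reach D s x y) :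
    Reach D t x y := by
  induction h with
  | refl hx => exact Reach.refl _ (hst _ hx)
  | tail _ adj hz ih => exact Reach.tail ih adj (hst _ hz)

/-- Crossing lemma: a walk starting outside `P` either stays outside `P`,
or there is a crossing edge whose outside endpoint is reachable outside `P`. -/
lemma reach_cross {s : Set V} {x y : V} (h : Reach D s x y) (P : V → Prop) (hx : ¬ P x) :
    Reach D {v | v ∈ s ∧ ¬ P v} x y ∨
    ∃ d c, Reach D {v | v ∈ s ∧ ¬ P v} x d ∧ D.dualGraph.Adj d c ∧ c ∈ s ∧ P c := by
  induction h with
  | refl hx' => exact Or.inl (Reach.refl _ ⟨hx', hx⟩)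
  | @tail y z r adj hz ih =>
    rcases ih with h1 | h2
    · by_cases hPz : P z
      · exact Or.inr ⟨y, z, h1, adj, hz, hPz⟩
      · exact Or.inl (Reach.tail h1 adj ⟨hz, hPz⟩)
    · exact Or.inr h2

/-- The descent lemma: the configuration of an edge `(T, b)` spanning the subtree at `ν`
together with a walk from `a` to `b` avoiding that subtree is contradictory. -/
lemma descent (S : Set V) : ∀ n (b a ν T : V), D.ds b ≤ n → b ∈ S → a ∈ S →
    D.le b a → b ≠ a → D.le a ν → D.MaxProx T b → D.le ν T →
    Reach D {v | v ∈ S ∧ ¬ D.le ν v} a b → False := by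
  intro n
  induction n with
  | zero => intro b a ν T h _ _ _ _ _ _ _ _; have := ds_pos D b; omega
  | succ n ih =>
    intro b a ν T hn hbS haS hba hbnea haν hT hνT hreach
    obtain ⟨μ, hpredμ, hμa, hμroot⟩ :=
      succ_exists (D.ds a) a b (Nat.le_refl _) hba hbnea
    have hbμ : D.le b μ := hpredμ ▸ D.pred_le μ hμroot
    have hbμne : b ≠ μ := hpredμ ▸ (D.pred_ne μ hμroot)
    have hμb : ¬ D.le μ b := fun h => hbμne (D.le_antisymm _ _ hbμ h)
    rcases reach_cross hreach.symm (fun v => D.le μ v) hμb with h1 | h1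
    · exact h1.mem_right.2 hμa
    obtain ⟨d, c, rbd, adj, hcs, hμc⟩ := h1
    obtain ⟨⟨hdS, hνd⟩, hμd⟩ : (d ∈ S ∧ ¬ D.le ν d) ∧ ¬ D.le μ d := rbd.mem_right
    obtain ⟨hcS, hνc⟩ := hcs
    rcases adj.2 with hmax | hmax
    · exact hμd (D.le_trans _ _ _ hμc (D.prox_gt _ _ hmax.1).1)
    have hcd : D.prox c d := hmax.1
    have hdc : D.le d c := (D.prox_gt _ _ hcd).1
    have hdμ : D.le d μ := by
      rcases chain_le' hμc hdc with h | h
      · exact absurd h hμd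
      · exact h
    have hdμne : d ≠ μ := fun h => hμd (h ▸ D.le_refl μ)
    have hdb : D.le d b := hpredμ ▸ D.pred_max μ d hμroot hdμ hdμne
    have hμproxd : D.prox μ d := prox_interval' hcd hμc hdμ hdμne.symm
    by_cases hdbeq : d = b
    · subst hdbeq
      have hμT : D.le μ T := D.le_trans _ _ _ hμa (D.le_trans _ _ _ haν hνT)
      have : c = T := top_unique hmax hT hμc hμT (fun h => hμd h)
      exact hνc (this ▸ hνT)
    · have hdsd : D.ds d ≤ n := by
        have := ds_lt hdb hdbeq
        omega
      have hμν : D.le μ ν := D.le_trans _ _ _ hμa haν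
      refine ih d b μ c hdsd hdS hbS hdb hdbeq hbμ hmax hμc ?_
      refine rbd.mono ?_
      rintro v ⟨⟨hv1, _⟩, hv3⟩
      exact ⟨hv1, hv3⟩

end EnriquesDiagram

namespace EnriquesDiagram

variable {V : Type} [Fintype V] [DecidableEq V] {D : EnriquesDiagram V}

/-- Main lemma: if `m` is the maximal element of `C` below `p`, then `p` is
proximate to `m`, provided `C` is connected. -/
lemma main_prox (S : Set V) (hreach_all : ∀ x, x ∈ S → ∀ y, y ∈ S → Reach D S x y)
    (p m : V) (hp : p ∈ S) (hm : m ∈ S) (hmp : D.le m p) (hne : m ≠ p)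
    (hmax : ∀ q, q ∈ S → D.le q p → q ≠ p → D.le q m) : D.prox p m := by
  by_contra hnp
  have hproot : p ≠ D.root := by
    intro h
    exact hne (D.le_antisymm _ _ hmp (h ▸ D.root_le m))
  have hpm : ¬ D.le p m := fun h => hne (D.le_antisymm _ _ hmp h)
  rcases reach_cross (hreach_all m hm p hp) (fun v => D.le p v) hpm with h1 | h1
  · exact h1.mem_right.2 (D.le_refl p)
  obtain ⟨d, c, rmd, adj, hcS, hpc⟩ := h1
  obtain ⟨hdS, hpd⟩ : d ∈ S ∧ ¬ D.le p d := rmd.mem_right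
  rcases adj.2 with hmaxdc | hmaxcd
  · exact hpd (D.le_trans _ _ _ hpc (D.prox_gt _ _ hmaxdc.1).1)
  have hcd : D.prox c d := hmaxcd.1
  have hdc : D.le d c := (D.prox_gt _ _ hcd).1
  have hdp : D.le d p := by
    rcases chain_le' hpc hdc with h | h
    · exact absurd h hpd
    · exact h
  have hdpne : d ≠ p := fun h => hpd (h ▸ D.le_refl p)
  have hdm : D.le d m := hmax d hdS hdp hdpne
  have hppd : D.prox p d := prox_interval' hcd hpc hdp hdpne.symm
  by_cases hdmeq : d = m
  · exact hnp (hdmeq ▸ hppd)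
  · exact descent S (D.ds d) d m p c (Nat.le_refl _) hdS hm hdm hdmeq hmp hmaxcd hpc rmd

lemma exists_root (S : Set V) (hS : S.Nonempty)
    (hreach_all : ∀ x, x ∈ S → ∀ y, y ∈ S → Reach D S x y) :
    ∃ r, r ∈ S ∧ ∀ x, x ∈ S → D.le r x := by
  classical
  obtain ⟨r, hrS, hrmin⟩ :=
    Finset.exists_min_image (α := ℕ) (Set.toFinset S) (fun x => D.ds x)
      (by obtain ⟨c, hc⟩ := hS; exact ⟨c, Set.mem_toFinset.mpr hc⟩)
  rw [Set.mem_toFinset] at hrS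
  have hminimal : ∀ z, z ∈ S → D.le z r → z = r := by
    intro z hzS hzr
    by_contra hzrne
    have := ds_lt hzr hzrne
    have := hrmin z (Set.mem_toFinset.mpr hzS)
    omega
  refine ⟨r, hrS, ?_⟩
  intro x hx
  have hr : Reach D S r x := hreach_all r hrS x hx
  clear hx
  induction hr with
  | refl _ => exact D.le_refl r
  | @tail y z rry adj hz ih =>
    rcases adj.2 with hmax | hmax
    · -- y prox z : z ≤ y
      have hzy : D.le z y := (D.prox_gt _ _ hmax.1).1
      rcases chain_le' ih hzy with h | h
      · exact h
      · exact (hminimal z hz h) ▸ D.le_refl r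
    · -- z prox y : y ≤ z
      exact D.le_trans _ _ _ ih (D.prox_gt _ _ hmax.1).1

lemma reach_of_connected {S : Set V} (h : (D.dualGraph.induce S).Connected) :
    ∀ x, x ∈ S → ∀ y, y ∈ S → Reach D S x y := by
  intro x hx y hy
  obtain ⟨w⟩ := h.preconnected ⟨x, hx⟩ ⟨y, hy⟩
  have : ∀ (u v : S), (D.dualGraph.induce S).Walk u v → Reach D S u.1 v.1 := by
    intro u v w
    induction w with
    | nil => exact Reach.refl _ (by exact Subtype.coe_prop _)
    | @cons a b c h w ih =>
      have hadj : D.dualGraph.Adj a.1 b.1 := by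
        simpa [SimpleGraph.comap_adj] using h
      exact Reach.trans (Reach.single a.2 b.2 hadj) ih
  exact this ⟨x, hx⟩ ⟨y, hy⟩ w

end EnriquesDiagram

open EnriquesDiagram in
/-- If `C` induces a connected subgraph of the dual graph of `D`, then `C`, with
the order and the proximity restricted from `D`, is an Enriques diagram; in
particular every non-root vertex of `C` is proximate (in `D`) to its immediate
predecessor in `C`. -/
theorem stmt7 {V : Type} [Fintype V] [DecidableEq V] (D : EnriquesDiagram V)
    (C : Finset V) (hconn : (D.dualGraph.induce (↑C : Set V)).Connected) :
    ∃ E : EnriquesDiagram {x : V // x ∈ C},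
      (∀ a b, E.le a b ↔ D.le a.1 b.1) ∧
      (∀ a b, E.prox a b ↔ D.prox a.1 b.1) ∧
      (∀ p, p ≠ E.root → D.prox p.1 (E.pred p).1) := by
  classical
  have hreach_all := reach_of_connected hconn
  have hSne : (↑C : Set V).Nonempty := by
    obtain ⟨⟨c, hc⟩⟩ := hconn.nonempty
    exact ⟨c, hc⟩
  obtain ⟨r, hrS, hrmin⟩ := exists_root (↑C : Set V) hSne hreach_all
  have hrC : r ∈ C := hrS
  have hpred : ∀ v, v ∈ C → v ≠ r → ∃ q, q ∈ C ∧ D.le q v ∧ q ≠ v ∧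
      ∀ q', q' ∈ C → D.le q' v → q' ≠ v → D.le q' q := by
    intro v hv hvr
    obtain ⟨q, hqT, hqmax⟩ := Finset.exists_max_image
      (C.filter (fun q => D.le q v ∧ q ≠ v)) (fun x => D.ds x)
      ⟨r, Finset.mem_filter.mpr ⟨hrC, hrmin v hv, fun h => hvr h.symm⟩⟩
    rw [Finset.mem_filter] at hqT
    refine ⟨q, hqT.1, hqT.2.1, hqT.2.2, ?_⟩
    intro q' hq'C hq'le hq'ne
    have hq'T : q' ∈ C.filter (fun q => D.le q v ∧ q ≠ v) :=
      Finset.mem_filter.mpr ⟨hq'C, hq'le, hq'ne⟩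
    rcases chain_le' (D := D) (y := v) hq'le hqT.2.1 with h | h
    · exact h
    · by_cases he : q = q'
      · exact he ▸ D.le_refl q
      · have := ds_lt (D := D) h he
        have := hqmax q' hq'T
        omega
  have hex : ∀ v : {x : V // x ∈ C}, ∃ w : {x : V // x ∈ C}, v.1 ≠ r →
      D.le w.1 v.1 ∧ w.1 ≠ v.1 ∧
      ∀ q', q' ∈ C → D.le q' v.1 → q' ≠ v.1 → D.le q' w.1 := by
    intro v
    by_cases h : v.1 = r
    · refine ⟨v, fun h' => ?_⟩
      exact absurd h h'
    · obtain ⟨q, hq1, hq2, hq3, hq4⟩ := hpred v.1 v.2 h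
      exact ⟨⟨q, hq1⟩, fun _ => ⟨hq2, hq3, hq4⟩⟩
  choose predC hpredspec using hex
  have hmain : ∀ (v : {x : V // x ∈ C}), v.1 ≠ r → D.prox v.1 (predC v).1 := by
    intro v hvr
    have hs := hpredspec v hvr
    exact main_prox (↑C : Set V) hreach_all v.1 (predC v).1 v.2 (predC v).2
      hs.1 hs.2.1 (fun q hq hle hne => hs.2.2 q hq hle hne)
  refine ⟨{
    le := fun a b => D.le a.1 b.1
    le_refl := fun a => D.le_refl a.1
    le_trans := fun a b c hab hbc => D.le_trans _ _ _ hab hbc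
    le_antisymm := fun a b hab hba => Subtype.ext (D.le_antisymm _ _ hab hba)
    root := ⟨r, hrC⟩
    root_le := fun v => hrmin v.1 v.2
    pred := predC
    pred_le := fun v hv => (hpredspec v (fun h => hv (Subtype.ext h))).1
    pred_ne := fun v hv heq =>
      (hpredspec v (fun h => hv (Subtype.ext h))).2.1 (congrArg Subtype.val heq)
    pred_max := fun v q hv hq hne =>
      (hpredspec v (fun h => hv (Subtype.ext h))).2.2 q.1 q.2 hq
        (fun h => hne (Subtype.ext h))
    prox := fun a b => D.prox a.1 b.1
    prox_pred := fun v hv => hmain v (fun h => hv (Subtype.ext h))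
    root_not_prox := fun q hq => by
      obtain ⟨hle, hne⟩ := D.prox_gt _ _ hq
      exact hne (D.le_antisymm _ _ (hrmin q.1 q.2) hle)
    prox_gt := fun p q h =>
      ⟨(D.prox_gt _ _ h).1, fun he => (D.prox_gt _ _ h).2 (congrArg Subtype.val he)⟩
    prox_at_most_two := fun p a b c h1 h2 h3 => by
      rcases D.prox_at_most_two p.1 a.1 b.1 c.1 h1 h2 h3 with h | h | h
      · exact Or.inl (Subtype.ext h)
      · exact Or.inr (Or.inl (Subtype.ext h))
      · exact Or.inr (Or.inr (Subtype.ext h))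
    third_unique := fun p q a b h1 h2 h3 h4 h5 =>
      Subtype.ext (D.third_unique p.1 q.1 a.1 b.1 h1 h2 h3 h4 h5)
    prox_pred_prox := fun p q' hp hq' hne => by
      have hvr : p.1 ≠ r := fun h => hp (Subtype.ext h)
      have hs := hpredspec p hvr
      have hm : D.prox p.1 (predC p).1 := hmain p hvr
      have hproot : p.1 ≠ D.root := prox_ne_root hm
      by_cases hcase : (predC p).1 = D.pred p.1
      · have hq'pred : q'.1 ≠ D.pred p.1 := by
          intro h
          exact hne (Subtype.ext (h.trans hcase.symm))
        have := D.prox_pred_prox p.1 q'.1 hproot hq' hq'pred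
        show D.prox (predC p).1 q'.1
        rw [hcase]
        exact this
      · exfalso
        have hpC : D.pred p.1 ∉ C := by
          intro hmem
          have h1 : D.le (D.pred p.1) (predC p).1 :=
            hs.2.2 _ hmem (D.pred_le _ hproot) (D.pred_ne _ hproot)
          have h2 : D.le (predC p).1 (D.pred p.1) :=
            D.pred_max p.1 (predC p).1 hproot hs.1 hs.2.1
          exact hcase (D.le_antisymm _ _ h2 h1)
        rcases D.prox_at_most_two p.1 (D.pred p.1) (predC p).1 q'.1
          (D.prox_pred p.1 hproot) hm hq' with h | h | h
        · exact hcase h.symm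
        · exact hne (Subtype.ext h.symm)
        · exact hpC (h ▸ q'.2)
  }, fun a b => Iff.rfl, fun a b => Iff.rfl,
     fun p hp => hmain p (fun h => hp (Subtype.ext h))⟩
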